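/- arXiv:1505.05793 — 6 statements merged into one kernel-verified Lean document; each statement's English description precedes it below -/
import Mathlib

section
/- Let (X,d) and (Y,d') be metric spaces, f : X → Y Lipschitz, S ⊆ X, and x ∈ S. If limsup_{X ∋ y → x} d'(f(y),f(x))/d(y,x) > limsup_{S ∋ y → x} d'(f(y),f(x))/d(y,x), then x is a porosity point of S; that is, there exist η > 0 and a sequence yₙ → x with yₙ ≠ x such that S ∩ B(yₙ, η d(x,yₙ)) = ∅ for all n. -/
open Metric Filter Set Topology

/-- If the pointwise Lipschitz constant of a Lipschitz map `f` at `x ∈ S` computed in the whole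
space strictly exceeds the one computed within `S`, then `S` is porous at `x`: there are `η > 0`
and points `yₙ → x`, `yₙ ≠ x`, with `S ∩ B(yₙ, η d(x,yₙ)) = ∅`. -/
theorem porosity_of_limsup_lt {X Y : Type*} [MetricSpace X] [MetricSpace Y]
    (f : X → Y) (L : NNReal) (hL : 0 < L) (hf : LipschitzWith L f)
    (S : Set X) (x : X) (hx : x ∈ S)
    (h : Filter.limsup (fun y => dist (f y) (f x) / dist y x) (nhdsWithin x (S \ {x})) <
         Filter.limsup (fun y => dist (f y) (f x) / dist y x) (nhdsWithin x {x}ᶜ)) :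
    ∃ η > (0 : ℝ), ∃ y : ℕ → X, Tendsto y atTop (nhds x) ∧ (∀ n, y n ≠ x) ∧
      ∀ n, S ∩ ball (y n) (η * dist x (y n)) = ∅ := by
  set g : X → ℝ := fun y => dist (f y) (f x) / dist y x with hgdef
  have hg0 : ∀ y, 0 ≤ g y := fun y => div_nonneg dist_nonneg dist_nonneg
  have hgL : ∀ y, g y ≤ L := by
    intro y
    rcases eq_or_ne y x with rfl | hyx
    · simp [hgdef]
    · have hd : 0 < dist y x := dist_pos.2 hyx
      rw [hgdef, div_le_iff₀ hd]
      exact hf.dist_le_mul y x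
  by_cases hbot : nhdsWithin x {x}ᶜ = ⊥
  · have hbot2 : nhdsWithin x (S \ {x}) = ⊥ := by
      refine bot_unique ?_
      rw [← hbot]
      exact nhdsWithin_mono x (fun y hy => hy.2)
    rw [hbot, hbot2] at h
    exact absurd h (lt_irrefl _)
  haveI hNB : (nhdsWithin x {x}ᶜ).NeBot := ⟨hbot⟩
  have hx2 : x ∈ closure ({x}ᶜ : Set X) := mem_closure_iff_nhdsWithin_neBot.2 hNB
  by_cases hSbot : nhdsWithin x (S \ {x}) = ⊥
  · -- x is isolated in S: porosity is easy with η = 1/2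
    have hx' : x ∉ closure (S \ {x}) := by
      rw [mem_closure_iff_nhdsWithin_neBot]
      exact fun hh => hh.ne hSbot
    obtain ⟨δ, hδ, hδ'⟩ : ∃ δ > (0:ℝ), ∀ z ∈ S \ {x}, ¬ dist x z < δ := by
      by_contra hcon
      push_neg at hcon
      exact hx' (Metric.mem_closure_iff.2 fun ε hε => by
        rcases hcon ε hε with ⟨z, hz1, hz2⟩; exact ⟨z, hz1, hz2⟩)
    have hyex : ∀ n : ℕ, ∃ y : X, y ≠ x ∧ dist y x < min (δ/2) (1/(n+1)) := by
      intro n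
      have hpos : (0:ℝ) < min (δ/2) (1/(n+1)) := lt_min (by linarith) (by positivity)
      rcases Metric.mem_closure_iff.1 hx2 _ hpos with ⟨y, hy1, hy2⟩
      exact ⟨y, hy1, by rwa [dist_comm]⟩
    choose y hy1 hy2 using hyex
    have hten : Tendsto y atTop (nhds x) := by
      rw [tendsto_iff_dist_tendsto_zero]
      refine squeeze_zero (fun n => dist_nonneg) (fun n => ?_)
        tendsto_one_div_add_atTop_nhds_zero_nat
      exact le_of_lt (lt_of_lt_of_le (hy2 n) (min_le_right _ _))
    refine ⟨1/2, by norm_num, y, hten, hy1, fun n => ?_⟩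
    rw [Set.eq_empty_iff_forall_notMem]
    rintro z ⟨hzS, hzb⟩
    rw [mem_ball] at hzb
    have hzx : z ≠ x := by
      intro hzxeq
      rw [hzxeq] at hzb
      nlinarith [@dist_nonneg X _ x (y n)]
    have h2 := dist_triangle x (y n) z
    have h3 : dist (y n) z < 1/2 * dist x (y n) := by rw [dist_comm]; exact hzb
    have h4 : dist x (y n) < δ/2 := by
      rw [dist_comm]; exact lt_of_lt_of_le (hy2 n) (min_le_left _ _)
    exact hδ' z ⟨hzS, hzx⟩ (by linarith)
  -- main case
  haveI hNBS : (nhdsWithin x (S \ {x})).NeBot := ⟨hSbot⟩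
  set a := Filter.limsup g (nhdsWithin x (S \ {x})) with ha
  set b := Filter.limsup g (nhdsWithin x {x}ᶜ) with hb
  have hBdd1 : (nhdsWithin x (S \ {x})).IsBoundedUnder (· ≤ ·) g :=
    Filter.isBoundedUnder_of ⟨L, hgL⟩
  have hBdd2 : (nhdsWithin x {x}ᶜ).IsBoundedUnder (· ≤ ·) g :=
    Filter.isBoundedUnder_of ⟨L, hgL⟩
  have hCob : (nhdsWithin x {x}ᶜ).IsCoboundedUnder (· ≤ ·) g :=
    Filter.isCoboundedUnder_le_of_le _ hg0
  have ha0 : 0 ≤ a :=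
    Filter.le_limsup_of_frequently_le
      (Filter.Eventually.frequently (Filter.Eventually.of_forall hg0)) hBdd1
  set c₁ := (2*a + b)/3 with hc₁
  set c₂ := (a + 2*b)/3 with hc₂
  have hab : a < b := h
  have hac₁ : a < c₁ := by rw [hc₁]; linarith
  have hc₁c₂ : c₁ < c₂ := by rw [hc₁, hc₂]; linarith
  have hc₂b : c₂ < b := by rw [hc₂]; linarith
  have hc₁0 : 0 < c₁ := lt_of_le_of_lt ha0 hac₁
  have hev : ∀ᶠ z in nhdsWithin x (S \ {x}), g z < c₁ :=
    Filter.eventually_lt_of_limsup_lt hac₁ hBdd1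
  obtain ⟨δ, hδ, hδ'⟩ : ∃ δ > (0:ℝ), ∀ z ∈ Metric.ball x δ ∩ (S \ {x}), g z < c₁ := by
    rcases Metric.mem_nhdsWithin_iff.1 hev with ⟨δ, hδ, hδ'⟩
    exact ⟨δ, hδ, fun z hz => hδ' hz⟩
  have hfr : ∃ᶠ z in nhdsWithin x {x}ᶜ, c₂ < g z :=
    Filter.frequently_lt_of_lt_limsup hCob hc₂b
  have hyex : ∀ n : ℕ, ∃ y : X, y ≠ x ∧ dist y x < min (δ/2) (1/(n+1)) ∧ c₂ < g y := by
    intro n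
    have hpos : (0:ℝ) < min (δ/2) (1/(n+1)) := lt_min (by linarith) (by positivity)
    have hball : ∀ᶠ z in nhds x, dist z x < min (δ/2) (1/(n+1)) :=
      Metric.eventually_nhds_iff.2 ⟨_, hpos, fun _ hy => hy⟩
    have hev2 : ∀ᶠ z in nhdsWithin x {x}ᶜ, z ≠ x ∧ dist z x < min (δ/2) (1/(n+1)) := by
      filter_upwards [self_mem_nhdsWithin, hball.filter_mono nhdsWithin_le_nhds] with z hz1 hz2
      exact ⟨hz1, hz2⟩
    rcases (hfr.and_eventually hev2).exists with ⟨z, hz1, hz2, hz3⟩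
    exact ⟨z, hz2, hz3, hz1⟩
  choose y hy1 hy2 hy3 using hyex
  have hten : Tendsto y atTop (nhds x) := by
    rw [tendsto_iff_dist_tendsto_zero]
    refine squeeze_zero (fun n => dist_nonneg) (fun n => ?_)
      tendsto_one_div_add_atTop_nhds_zero_nat
    exact le_of_lt (lt_of_lt_of_le (hy2 n) (min_le_right _ _))
  have hLc₁ : (0:ℝ) < L + c₁ := by positivity
  set η := min 1 ((c₂ - c₁)/(L + c₁)) with hη
  have hη0 : 0 < η := lt_min one_pos (div_pos (by linarith) hLc₁)
  have hη1 : η ≤ 1 := min_le_left _ _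
  have hη2 : η * (L + c₁) ≤ c₂ - c₁ := by
    calc η * (L + c₁) ≤ ((c₂ - c₁)/(L + c₁)) * (L + c₁) :=
          mul_le_mul_of_nonneg_right (min_le_right _ _) hLc₁.le
      _ = c₂ - c₁ := by field_simp
  refine ⟨η, hη0, y, hten, hy1, fun n => ?_⟩
  rw [Set.eq_empty_iff_forall_notMem]
  rintro z ⟨hzS, hzb⟩
  rw [mem_ball] at hzb
  -- hzb : dist z (y n) < η * dist x (y n)
  have hzx : z ≠ x := by
    intro hzxeq
    rw [hzxeq] at hzb
    nlinarith [@dist_nonneg X _ x (y n)]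
  have hrpos : 0 < dist x (y n) := dist_pos.2 (Ne.symm (hy1 n))
  have hzxd : 0 < dist z x := dist_pos.2 hzx
  have hdz : dist z x ≤ η * dist x (y n) + dist x (y n) := by
    have h1 := dist_triangle z (y n) x
    have h2 : dist (y n) x = dist x (y n) := dist_comm _ _
    linarith
  have hrδ : dist x (y n) < δ/2 := by
    rw [dist_comm]; exact lt_of_lt_of_le (hy2 n) (min_le_left _ _)
  have hzball : z ∈ Metric.ball x δ := by
    rw [mem_ball]
    nlinarith
  have hgz : dist (f z) (f x) / dist z x < c₁ := hδ' z ⟨hzball, hzS, hzx⟩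
  have hgz' : dist (f z) (f x) < c₁ * dist z x := (div_lt_iff₀ hzxd).1 hgz
  have hgy : c₂ * dist x (y n) < dist (f (y n)) (f x) := by
    have h3 : c₂ < dist (f (y n)) (f x) / dist (y n) x := hy3 n
    rw [dist_comm (y n) x] at h3
    exact (lt_div_iff₀ hrpos).1 h3
  have hlip : dist (f (y n)) (f z) ≤ L * dist (y n) z := hf.dist_le_mul _ _
  have htr := dist_triangle (f (y n)) (f z) (f x)
  have hynz : dist (y n) z < η * dist x (y n) := by rw [dist_comm]; exact hzb
  have hL0 : (0:ℝ) ≤ L := L.coe_nonneg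
  nlinarith [mul_le_mul_of_nonneg_left hdz hc₁0.le,
    mul_le_mul_of_nonneg_left hynz.le hL0,
    mul_le_mul_of_nonneg_right hη2 hrpos.le]
end

section
/- Let (X,d,μ) be a metric measure space in which every porous set has measure zero, let (Y,d') be a metric space, f : X → Y Lipschitz, and S ⊆ X measurable. Then for μ-almost every x ∈ S, limsup_{X ∋ y → x} d'(f(y),f(x))/d(x,y) = limsup_{S ∋ y → x} d'(f(y),f(x))/d(x,y). -/
open Metric Filter Set Topology MeasureTheory

/-- `S` is porous at `x`: for some `η > 0` there are points `yₙ → x`, `yₙ ≠ x`, whose balls of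
radius `η d(x,yₙ)` miss `S`. -/
def PorousAt {X : Type*} [MetricSpace X] (S : Set X) (x : X) : Prop :=
  ∃ η > (0 : ℝ), ∃ y : ℕ → X, Tendsto y atTop (nhds x) ∧ (∀ n, y n ≠ x) ∧
    ∀ n, S ∩ ball (y n) (η * dist x (y n)) = ∅

section Aux

variable {X Y : Type*} [MetricSpace X] [MetricSpace Y] {f : X → Y} {L : NNReal}

/-- pointwise difference quotient -/
private lemma aux_q_le (hf : LipschitzWith L f) (x y : X) :
    dist (f y) (f x) / dist y x ≤ (L : ℝ) := by
  rcases eq_or_ne y x with rfl | h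
  · simp
  · rw [div_le_iff₀ (dist_pos.2 h)]
    exact hf.dist_le_mul y x

private lemma aux_limsup_bot (u : X → ℝ) : limsup u (⊥ : Filter X) = 0 := by
  rw [Filter.limsup_eq]
  have : {a : ℝ | ∀ᶠ n in (⊥ : Filter X), u n ≤ a} = Set.univ := by
    ext a; simp
  rw [this]
  exact Real.sInf_of_not_bddBelow (by simpa using not_bddBelow_univ (α := ℝ))

private lemma aux_bdd (hf : LipschitzWith L f) (x : X) (F : Filter X) :
    F.IsBoundedUnder (· ≤ ·) (fun y => dist (f y) (f x) / dist y x) :=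
  isBoundedUnder_of ⟨(L : ℝ), fun y => aux_q_le hf x y⟩

private lemma aux_bdd_ge (x : X) (F : Filter X) :
    F.IsBoundedUnder (· ≥ ·) (fun y => dist (f y) (f x) / dist y x) :=
  isBoundedUnder_of ⟨0, fun y => div_nonneg dist_nonneg dist_nonneg⟩

private lemma aux_limsup_nonneg (hf : LipschitzWith L f) (x : X) (F : Filter X) :
    0 ≤ limsup (fun y => dist (f y) (f x) / dist y x) F := by
  rcases eq_or_neBot F with rfl | h
  · rw [aux_limsup_bot]
  · exact le_limsup_of_frequently_le
      (Frequently.of_forall fun y => div_nonneg dist_nonneg dist_nonneg) (aux_bdd hf x F)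

private lemma aux_limsup_mono (hf : LipschitzWith L f) (x : X) {F G : Filter X} (hFG : F ≤ G) :
    limsup (fun y => dist (f y) (f x) / dist y x) F ≤
    limsup (fun y => dist (f y) (f x) / dist y x) G := by
  rcases eq_or_neBot F with rfl | h
  · rw [aux_limsup_bot]; exact aux_limsup_nonneg hf x G
  · exact limsup_le_limsup_of_le hFG
      ((aux_bdd_ge x F).isCoboundedUnder_le) (aux_bdd hf x G)

/-- The bad set for parameters `a < b`. -/
private def badSet (f : X → Y) (S : Set X) (a b : ℝ) : Set X :=
  {x | 0 < a ∧ a < b ∧ x ∈ S ∧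
    (∀ᶠ y in nhdsWithin x (S \ {x}), dist (f y) (f x) / dist y x < a) ∧
    b < limsup (fun y => dist (f y) (f x) / dist y x) (nhdsWithin x {x}ᶜ)}

private lemma badSet_porous (hf : LipschitzWith L f) (S : Set X) (a b : ℝ) :
    ∀ x ∈ badSet f S a b, PorousAt (badSet f S a b) x := by
  intro x hx
  obtain ⟨ha, hab, hxS, hev, hlim⟩ := hx
  set q : X → ℝ := fun y => dist (f y) (f x) / dist y x with hq
  -- radius of validity of the eventual bound
  obtain ⟨r, hr, hrproof⟩ : ∃ r > 0, ∀ z, dist z x < r → z ∈ S \ {x} → q z < a := by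
    have := eventually_nhdsWithin_iff.1 hev
    rcases Metric.eventually_nhds_iff.1 this with ⟨ε, hε, hball⟩
    exact ⟨ε, hε, fun z hz hz' => hball hz hz'⟩
  -- the filter is nontrivial
  have hne : (nhdsWithin x {x}ᶜ).NeBot := by
    by_contra hb
    rw [not_neBot] at hb
    rw [hb, aux_limsup_bot] at hlim
    linarith
  -- frequently there are points with big difference quotient
  have hfreq : ∃ᶠ y in nhdsWithin x {x}ᶜ, b < q y ∧ y ≠ x ∧ dist x y < r / 2 := by
    have h1 : ∃ᶠ y in nhdsWithin x {x}ᶜ, b < q y :=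
      frequently_lt_of_lt_limsup ((aux_bdd_ge x _).isCoboundedUnder_le) hlim
    have h2 : ∀ᶠ y in nhdsWithin x {x}ᶜ, y ≠ x := by
      simpa using eventually_mem_nhdsWithin (s := {x}ᶜ) (a := x)
    have h3 : ∀ᶠ y in nhdsWithin x {x}ᶜ, dist x y < r / 2 := by
      apply eventually_nhdsWithin_of_eventually_nhds
      have : ∀ᶠ y in nhds x, dist y x < r / 2 :=
        Metric.eventually_nhds_iff.2 ⟨r / 2, by linarith, fun {y} h => h⟩
      exact this.mono fun y hy => by rwa [dist_comm]
    exact (h1.and_eventually (h2.and h3)).mono fun y ⟨h, h', h''⟩ => ⟨h, h', h''⟩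
  obtain ⟨y, hytend, hyprop⟩ := exists_seq_forall_of_frequently hfreq
  set η : ℝ := min ((b - a) / ((L : ℝ) + a + 1)) (1 / 2) with hη
  have hLa : (0 : ℝ) < (L : ℝ) + a + 1 := by positivity
  have hηpos : 0 < η := lt_min (div_pos (by linarith) hLa) (by norm_num)
  have hηhalf : η ≤ 1 / 2 := min_le_right _ _
  have hηkey : η * ((L : ℝ) + a) < b - a := by
    have h1 : η ≤ (b - a) / ((L : ℝ) + a + 1) := min_le_left _ _
    have hLa0 : (0 : ℝ) ≤ (L : ℝ) + a := by positivity
    have := mul_le_mul_of_nonneg_right h1 hLa0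
    have h2 : (b - a) / ((L : ℝ) + a + 1) * ((L : ℝ) + a) < b - a := by
      rw [div_mul_eq_mul_div, div_lt_iff₀ hLa]
      nlinarith
    linarith
  refine ⟨η, hηpos, y, hytend.mono_right nhdsWithin_le_nhds, fun n => (hyprop n).2.1, ?_⟩
  intro n
  obtain ⟨hqb, hyx, hyr⟩ := hyprop n
  set d : ℝ := dist x (y n) with hd
  have hdpos : 0 < d := dist_pos.2 (Ne.symm hyx)
  rw [Set.eq_empty_iff_forall_notMem]
  rintro z ⟨hzP, hzball⟩
  obtain ⟨ha', hab', hzS, -, -⟩ := hzP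
  have hzball' : dist z (y n) < η * d := by simpa [hd] using hzball
  -- z ≠ x
  have hzx : z ≠ x := by
    rintro rfl
    have h' : d < η * d := by rw [hd]; exact hzball'
    nlinarith
  -- z is near x
  have hzxd : dist z x < (1 + η) * d := by
    calc dist z x ≤ dist z (y n) + dist (y n) x := dist_triangle _ _ _
    _ < η * d + d := by
          have h1 : dist (y n) x = d := by rw [hd, dist_comm]
          linarith
    _ = (1 + η) * d := by ring
  have hzxr : dist z x < r := by nlinarith
  have hqz : q z < a := hrproof z hzxr ⟨hzS, hzx⟩
  have hzx0 : 0 < dist z x := dist_pos.2 hzx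
  have hfz : dist (f z) (f x) < a * ((1 + η) * d) := by
    have := (div_lt_iff₀ hzx0).1 hqz
    calc dist (f z) (f x) < a * dist z x := by
          simpa [hq, dist_comm] using this
    _ ≤ a * ((1 + η) * d) := by nlinarith
  have hfy : b * d < dist (f (y n)) (f x) := by
    have hd' : (0:ℝ) < dist (y n) x := by rw [dist_comm, ← hd]; exact hdpos
    have := (lt_div_iff₀ hd').1 hqb
    calc b * d = b * dist (y n) x := by rw [hd, dist_comm]
    _ < dist (f (y n)) (f x) := this
  have hlip : dist (f (y n)) (f z) ≤ (L : ℝ) * (η * d) := by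
    calc dist (f (y n)) (f z) ≤ (L : ℝ) * dist (y n) z := hf.dist_le_mul _ _
    _ ≤ (L : ℝ) * (η * d) := by
          have : dist (y n) z < η * d := by rwa [dist_comm] at hzball'
          nlinarith [this, NNReal.coe_nonneg L]
  have : b * d < (L : ℝ) * (η * d) + a * ((1 + η) * d) :=
    lt_of_lt_of_le hfy (le_trans (dist_triangle _ (f z) _) (by linarith))
  nlinarith

end Aux

/-- In a metric measure space where every porous set is null, for any Lipschitz `f` and any
measurable `S`, the pointwise Lipschitz constant at almost every `x ∈ S` computed within `S`
agrees with the one computed in the whole space. -/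
theorem limsup_eq_ae_of_porous_null {X Y : Type*} [MetricSpace X] [MeasurableSpace X]
    [MetricSpace Y] (μ : Measure X)
    (hporous : ∀ P : Set X, (∀ x ∈ P, PorousAt P x) → μ P = 0)
    (f : X → Y) (L : NNReal) (hf : LipschitzWith L f)
    (S : Set X) (hS : MeasurableSet S) :
    ∀ᵐ x ∂(μ.restrict S),
      Filter.limsup (fun y => dist (f y) (f x) / dist y x) (nhdsWithin x {x}ᶜ) =
      Filter.limsup (fun y => dist (f y) (f x) / dist y x) (nhdsWithin x (S \ {x})) := by
  rw [ae_iff, Measure.restrict_apply' hS]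
  have hsub : {x | ¬ (Filter.limsup (fun y => dist (f y) (f x) / dist y x) (nhdsWithin x {x}ᶜ) =
      Filter.limsup (fun y => dist (f y) (f x) / dist y x) (nhdsWithin x (S \ {x})))} ∩ S ⊆
      ⋃ (a : ℚ) (b : ℚ), badSet f S (a : ℝ) (b : ℝ) := by
    rintro x ⟨hneq, hxS⟩
    set q : X → ℝ := fun y => dist (f y) (f x) / dist y x with hq
    have hmono : limsup q (nhdsWithin x (S \ {x})) ≤ limsup q (nhdsWithin x {x}ᶜ) :=
      aux_limsup_mono hf x (nhdsWithin_mono x (fun z hz => hz.2))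
    have hlt : limsup q (nhdsWithin x (S \ {x})) < limsup q (nhdsWithin x {x}ᶜ) :=
      lt_of_le_of_ne hmono (fun h => hneq h.symm)
    have hnn : 0 ≤ limsup q (nhdsWithin x (S \ {x})) := aux_limsup_nonneg hf x _
    obtain ⟨a, ha1, ha2⟩ := exists_rat_btwn hlt
    obtain ⟨b, hb1, hb2⟩ := exists_rat_btwn ha2
    refine Set.mem_iUnion.2 ⟨a, Set.mem_iUnion.2 ⟨b, ?_⟩⟩
    refine ⟨lt_of_le_of_lt hnn ha1, by exact_mod_cast hb1, hxS, ?_, hb2⟩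
    exact eventually_lt_of_limsup_lt ha1 (aux_bdd hf x _)
  refine measure_mono_null hsub (measure_iUnion_null fun a => measure_iUnion_null fun b => ?_)
  exact hporous _ (badSet_porous hf S _ _)
end

section
/- Let f : (X,d_X,μ) → (Y,d_Y) be a Lipschitz function on a metric measure space with μ(X) < ∞ such that Lip(f,x) < ε for μ-a.e. x ∈ X, where ε > 0. Then for every δ > 0 there exist a subset X' ⊆ X with μ(X') ≥ μ(X) − δ and R > 0 such that whenever x, y ∈ X' and d_X(x,y) < R, one has d_Y(f(x),f(y)) ≤ ε d_X(x,y). -/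
open Metric Filter Set Topology MeasureTheory

/-- The pointwise (upper) Lipschitz constant `Lip(f,x)`. -/
noncomputable def pLip {X Y : Type*} [MetricSpace X] [MetricSpace Y] (f : X → Y) (x : X) : ℝ :=
  Filter.limsup (fun y => dist (f y) (f x) / dist y x) (nhdsWithin x {x}ᶜ)

/-- If `f` is Lipschitz on a finite metric measure space and `Lip(f,x) < ε` a.e., then for every
`δ > 0` there are `X' ⊆ X` with `μ(X') ≥ μ(X) − δ` and `R > 0` so that `f` is `ε`-Lipschitz on
pairs of points of `X'` at distance less than `R`. -/
theorem lipschitz_decomposition {X Y : Type*} [MetricSpace X] [MeasurableSpace X] [MetricSpace Y]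
    (μ : Measure X) [IsFiniteMeasure μ]
    (f : X → Y) (L : NNReal) (hf : LipschitzWith L f)
    (ε : ℝ) (hε : 0 < ε) (hlip : ∀ᵐ x ∂μ, pLip f x < ε)
    (δ : ℝ) (hδ : 0 < δ) :
    ∃ X' : Set X, ∃ R > (0 : ℝ), μ Set.univ - ENNReal.ofReal δ ≤ μ X' ∧
      ∀ x ∈ X', ∀ y ∈ X', dist x y < R → dist (f x) (f y) ≤ ε * dist x y := by
  set A : ℕ → Set X := fun n =>
    {x | ∀ y, dist y x < 1 / (n + 1) → dist (f y) (f x) ≤ ε * dist y x} with hA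
  have hmono : Monotone A := by
    intro m n hmn x hx y hy
    refine hx y (lt_of_lt_of_le hy ?_)
    apply one_div_le_one_div_of_le (by positivity)
    exact_mod_cast add_le_add_left (Nat.cast_le.2 hmn) 1
  -- a.e. x lies in the union
  have hae : ∀ᵐ x ∂μ, x ∈ ⋃ n, A n := by
    filter_upwards [hlip] with x hx
    have hbdd : IsBoundedUnder (· ≤ ·) (nhdsWithin x {x}ᶜ)
        (fun y => dist (f y) (f x) / dist y x) := by
      refine isBoundedUnder_of ⟨(L : ℝ), fun y => ?_⟩
      rcases eq_or_ne y x with rfl | hyx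
      · simp
      · rw [div_le_iff₀ (dist_pos.2 hyx)]
        exact hf.dist_le_mul y x
    have hev := eventually_lt_of_limsup_lt hx hbdd
    rw [eventually_nhdsWithin_iff] at hev
    rcases Metric.eventually_nhds_iff.1 hev with ⟨r, hr, hball⟩
    obtain ⟨n, hn⟩ := exists_nat_one_div_lt hr
    refine mem_iUnion.2 ⟨n, fun y hy => ?_⟩
    rcases eq_or_ne y x with rfl | hyx
    · simp
    · have := hball (show dist y x < r from hy.trans hn) hyx
      rw [div_lt_iff₀ (dist_pos.2 hyx)] at this
      exact this.le
  have hunion : μ (⋃ n, A n) = μ Set.univ := by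
    refine measure_congr (ae_eq_univ.2 ?_)
    exact ae_iff.1 hae
  rcases eq_or_ne (μ Set.univ) 0 with h0 | h0
  · refine ⟨A 0, 1, one_pos, by simp [h0], fun x hx y hy hxy => ?_⟩
    rw [dist_comm (f x), dist_comm x y]
    exact hx y (by rwa [dist_comm, one_div, Nat.cast_zero, zero_add, inv_one])
  · have hlt : μ Set.univ - ENNReal.ofReal δ < μ (⋃ n, A n) := by
      rw [hunion]
      exact ENNReal.sub_lt_self (measure_ne_top μ _) h0 (by simp [hδ, hδ.le])
    have htend : Tendsto (fun n => μ (A n)) atTop (𝓝 (μ (⋃ n, A n))) :=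
      tendsto_measure_iUnion_atTop hmono
    obtain ⟨n, hn⟩ := (htend.eventually (eventually_gt_nhds hlt)).exists
    refine ⟨A n, 1 / (n + 1), by positivity, hn.le, fun x hx y hy hxy => ?_⟩
    rw [dist_comm (f x), dist_comm x y]
    exact hx y (by rwa [dist_comm])
end

section
/- Let V be a normed vector space over ℝ, let T ∈ L(ℝⁿ, V), and let ε_m > 0 be small enough (depending only on m = n). If i attains the maximum of ‖T(e_j)‖ over j = 1,...,n, then for every vector v in the cone C(e_i, ε_n) = { w ∈ ℝⁿ : ‖w − (w·e_i) e_i‖ ≤ ε_n |w·e_i| } one has ‖T(v)‖ ≥ (1/(2n)) ‖T‖ ‖v‖. In particular ‖T‖ ≤ n max_j ‖T(e_j)‖. -/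
open Finset

/-- There is `ε_n > 0`, depending only on `n`, such that for every operator
`T : ℝⁿ → V` and every index `i` attaining `max_j ‖T(e_j)‖`, one has `‖T‖ ≤ n max_j ‖T(e_j)‖`
and `‖T v‖ ≥ (1/(2n)) ‖T‖ ‖v‖` for all `v` in the cone `C(e_i, ε_n)`. -/
theorem small_cone_estimate (n : ℕ) (hn : 0 < n) :
    ∃ ε : ℝ, 0 < ε ∧
      ∀ (V : Type) [NormedAddCommGroup V] [NormedSpace ℝ V]
        (T : EuclideanSpace ℝ (Fin n) →L[ℝ] V) (i : Fin n),
        (∀ j : Fin n, ‖T (EuclideanSpace.single j (1 : ℝ))‖ ≤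
            ‖T (EuclideanSpace.single i (1 : ℝ))‖) →
        (‖T‖ ≤ (n : ℝ) * ‖T (EuclideanSpace.single i (1 : ℝ))‖ ∧
          ∀ v : EuclideanSpace ℝ (Fin n),
            ‖v - EuclideanSpace.single i (v i)‖ ≤ ε * |v i| →
            (1 / (2 * (n : ℝ))) * ‖T‖ * ‖v‖ ≤ ‖T v‖) := by
  have hnn : (1:ℝ) ≤ (n:ℝ) := by exact_mod_cast hn
  have hnpos : (0:ℝ) < (n:ℝ) := by linarith
  refine ⟨1 / (4 * (n:ℝ)), by positivity, ?_⟩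
  intro V _ _ T i hi
  set M := ‖T (EuclideanSpace.single i (1 : ℝ))‖ with hM
  have hM0 : 0 ≤ M := norm_nonneg _
  -- expansion
  have hexp : ∀ v : EuclideanSpace ℝ (Fin n),
      T v = ∑ j, v j • T (EuclideanSpace.single j (1:ℝ)) := by
    intro v
    have h := (EuclideanSpace.basisFun (Fin n) ℝ).sum_repr v
    conv_lhs => rw [← h]
    rw [map_sum]
    simp [EuclideanSpace.basisFun_repr, EuclideanSpace.basisFun_apply]
  have hcoord : ∀ (v : EuclideanSpace ℝ (Fin n)) (j : Fin n), |v j| ≤ ‖v‖ := by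
    intro v j
    have h := abs_real_inner_le_norm (EuclideanSpace.single j (1:ℝ)) v
    simpa [EuclideanSpace.inner_single_left, EuclideanSpace.norm_single] using h
  have hbound : ∀ v : EuclideanSpace ℝ (Fin n), ‖T v‖ ≤ (n:ℝ) * M * ‖v‖ := by
    intro v
    rw [hexp v]
    calc ‖∑ j, v j • T (EuclideanSpace.single j (1:ℝ))‖
        ≤ ∑ j, ‖v j • T (EuclideanSpace.single j (1:ℝ))‖ := norm_sum_le _ _
      _ ≤ ∑ _j : Fin n, ‖v‖ * M := by
          refine Finset.sum_le_sum fun j _ => ?_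
          rw [norm_smul, Real.norm_eq_abs]
          exact mul_le_mul (hcoord v j) (hi j) (norm_nonneg _) (norm_nonneg _)
      _ = (n:ℝ) * M * ‖v‖ := by simp [Finset.sum_const]; ring
  have hT : ‖T‖ ≤ (n:ℝ) * M :=
    T.opNorm_le_bound (by positivity) hbound
  refine ⟨hT, ?_⟩
  intro v hv
  set ε : ℝ := 1 / (4 * (n:ℝ)) with hε
  set a : ℝ := v i with ha
  set w : EuclideanSpace ℝ (Fin n) := v - EuclideanSpace.single i a with hw
  have hsingle : EuclideanSpace.single i a = a • EuclideanSpace.single i (1:ℝ) := by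
    ext k; simp [EuclideanSpace.single_apply]
  have hvsum : v = EuclideanSpace.single i a + w := by simp [hw]
  have hTw : ‖T w‖ ≤ (n:ℝ) * M * (ε * |a|) := by
    calc ‖T w‖ ≤ (n:ℝ) * M * ‖w‖ := hbound w
      _ ≤ (n:ℝ) * M * (ε * |a|) := by
          refine mul_le_mul_of_nonneg_left hv (by positivity)
  have hTv : (3/4) * (|a| * M) ≤ ‖T v‖ := by
    have h1 : T v = a • T (EuclideanSpace.single i (1:ℝ)) + T w := by
      conv_lhs => rw [hvsum]
      rw [map_add, hsingle, map_smul]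
    have h2 : |a| * M - ‖T w‖ ≤ ‖T v‖ := by
      rw [h1]
      have h := norm_sub_norm_le (a • T (EuclideanSpace.single i (1:ℝ))) (-(T w))
      simp only [sub_neg_eq_add, norm_neg] at h
      rw [norm_smul, Real.norm_eq_abs] at h
      linarith
    have h3 : (n:ℝ) * M * (ε * |a|) = (1/4) * (|a| * M) := by
      rw [hε]; field_simp
    nlinarith [hTw]
  have hvle : ‖v‖ ≤ (1 + ε) * |a| := by
    calc ‖v‖ = ‖EuclideanSpace.single i a + w‖ := by rw [← hvsum]
      _ ≤ ‖EuclideanSpace.single i a‖ + ‖w‖ := norm_add_le _ _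
      _ ≤ |a| + ε * |a| := by
          rw [EuclideanSpace.norm_single, Real.norm_eq_abs]
          linarith [hv]
      _ = (1 + ε) * |a| := by ring
  have habs : (0:ℝ) ≤ |a| := abs_nonneg a
  have hεle : ε ≤ 1/4 := by
    rw [hε, div_le_div_iff₀ (by positivity) (by norm_num)]
    linarith
  have hTvnorm : ‖T‖ * ‖v‖ ≤ (n:ℝ) * M * ((1 + ε) * |a|) :=
    mul_le_mul hT hvle (norm_nonneg v) (by positivity)
  rw [show (1 / (2 * (n:ℝ))) * ‖T‖ * ‖v‖ = ‖T‖ * ‖v‖ / (2 * (n:ℝ)) by ring,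
    div_le_iff₀ (by positivity)]
  nlinarith [mul_le_mul_of_nonneg_left hTv (le_of_lt hnpos),
    mul_nonneg (mul_nonneg hnpos.le hM0) habs]
end

section
/- Let ξ, δ, L > 0, let p₁,...,pₙ ∈ ℝⁿ be ξ-separated vectors with ‖pᵢ‖ > δ for each i, and let f₁,...,fₙ be elements of a Banach space V with ‖fᵢ‖ ≤ L. Then p₁,...,pₙ are linearly independent, and the unique linear map T : ℝⁿ → V with T(pᵢ) = fᵢ for all i satisfies ‖T‖ ≤ L n / (ξ δ). -/
open Finset

/-- If `p₁,…,pₙ ∈ ℝⁿ` are `ξ`-separated with `‖pᵢ‖ > δ` and `f₁,…,fₙ ∈ V` satisfy `‖fᵢ‖ ≤ L`,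
then the `pᵢ` are linearly independent and the unique linear map `T` with `T(pᵢ) = fᵢ`
satisfies `‖T‖ ≤ L n / (ξ δ)`. -/
theorem gradient_bound {n : ℕ} (V : Type*) [NormedAddCommGroup V] [NormedSpace ℝ V]
    [CompleteSpace V] (ξ δ L : ℝ) (hξ : 0 < ξ) (hδ : 0 < δ) (hL : 0 < L)
    (p : Fin n → EuclideanSpace ℝ (Fin n))
    (hsep : ∀ l : Fin n → ℝ, l ≠ 0 → ∀ i : Fin n,
      ξ * ‖l i • p i‖ < ‖∑ j : Fin n, l j • p j‖)
    (hp : ∀ i, δ < ‖p i‖)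
    (f : Fin n → V) (hf : ∀ i, ‖f i‖ ≤ L) :
    LinearIndependent ℝ p ∧
      (∃! T : EuclideanSpace ℝ (Fin n) →L[ℝ] V, ∀ i, T (p i) = f i) ∧
      ∀ T : EuclideanSpace ℝ (Fin n) →L[ℝ] V, (∀ i, T (p i) = f i) →
        ‖T‖ ≤ L * n / (ξ * δ) := by
  have hli : LinearIndependent ℝ p := by
    rw [Fintype.linearIndependent_iff]
    intro g hg
    by_contra hc
    push_neg at hc
    obtain ⟨i, hi⟩ := hc
    have hne : g ≠ 0 := fun h => hi (by simp [h])
    have h1 := hsep g hne i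
    rw [hg, norm_zero] at h1
    nlinarith [norm_nonneg (g i • p i)]
  rcases Nat.eq_zero_or_pos n with rfl | hn
  · refine ⟨hli, ⟨0, fun i => i.elim0, fun T' _ => ?_⟩, fun T _ => ?_⟩
    · ext x
      have : x = 0 := Subsingleton.elim _ _
      simp [this]
    · have hT0 : T = 0 := by
        ext x
        have : x = 0 := Subsingleton.elim _ _
        simp [this]
      simp [hT0]
  have : Nonempty (Fin n) := ⟨⟨0, hn⟩⟩
  have hcard : Fintype.card (Fin n) = Module.finrank ℝ (EuclideanSpace ℝ (Fin n)) := by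
    simp
  set B := basisOfLinearIndependentOfCardEqFinrank hli hcard with hBdef
  have hB : ∀ i, B i = p i := by
    intro i
    rw [hBdef, coe_basisOfLinearIndependentOfCardEqFinrank]
  -- key coordinate bound
  have key : ∀ T : EuclideanSpace ℝ (Fin n) →L[ℝ] V, (∀ i, T (p i) = f i) →
        ‖T‖ ≤ L * n / (ξ * δ) := by
    intro T hT
    apply T.opNorm_le_bound (by positivity)
    intro x
    rcases eq_or_ne x 0 with rfl | hx
    · simp
    · set l : Fin n → ℝ := fun i => B.repr x i with hl
      have hxl : ∑ j : Fin n, l j • p j = x := by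
        conv_rhs => rw [← B.sum_repr x]
        exact Finset.sum_congr rfl fun j _ => by rw [hB]
      have hlne : l ≠ 0 := by
        intro h0
        apply hx
        rw [← hxl]
        simp [h0]
      have hbound : ∀ i, |l i| ≤ ‖x‖ / (ξ * δ) := by
        intro i
        have h1 := hsep l hlne i
        rw [hxl] at h1
        rw [norm_smul, Real.norm_eq_abs] at h1
        have h2 : ξ * (δ * |l i|) ≤ ξ * (|l i| * ‖p i‖) := by
          apply mul_le_mul_of_nonneg_left _ hξ.le
          rw [mul_comm δ]
          exact mul_le_mul_of_nonneg_left (hp i).le (abs_nonneg _)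
        rw [le_div_iff₀ (by positivity)]
        nlinarith
      have hTx : T x = ∑ j : Fin n, l j • f j := by
        rw [← hxl]
        simp only [map_sum, map_smul]
        exact Finset.sum_congr rfl fun j _ => by rw [hT]
      calc ‖T x‖ ≤ ∑ j : Fin n, ‖l j • f j‖ := hTx ▸ norm_sum_le _ _
        _ ≤ ∑ j : Fin n, (‖x‖ / (ξ * δ)) * L := by
            apply Finset.sum_le_sum
            intro j _
            rw [norm_smul, Real.norm_eq_abs]
            have := hf j
            have := norm_nonneg (f j)
            have := hbound j
            have := abs_nonneg (l j)
            nlinarith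
        _ = L * n / (ξ * δ) * ‖x‖ := by
            simp [Finset.sum_const]
            ring
  refine ⟨hli, ⟨LinearMap.toContinuousLinearMap (B.constr ℝ f), ?_, ?_⟩, key⟩
  · intro i
    simp only [LinearMap.coe_toContinuousLinearMap']
    rw [← hB i, Module.Basis.constr_basis]
  · intro T' hT'
    apply ContinuousLinearMap.coe_injective
    apply B.ext
    intro i
    rw [ContinuousLinearMap.coe_coe, LinearMap.coe_toContinuousLinearMap,
      Module.Basis.constr_basis, hB i, hT' i]
end

section
/- Let X be a compact metric space, ρ : X → [0,1] continuous, and suppose γₙ → γ_∞ in Γ (Hausdorff convergence of graphs in X × ℝ of 1-Lipschitz maps on compact subsets of ℝ, with a uniform bound on domains). Then ∫*_{γ_∞} ρ ≤ liminf_{n→∞} ∫*_{γₙ} ρ, i.e., the *-integral is lower semicontinuous along convergent sequences of curve fragments. -/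
open Metric MeasureTheory Set Filter Topology

/-- The graph of a curve fragment `γ : K → X`, as a subset of `X × ℝ`. -/
def fragGraph {X : Type*} (γ : ℝ → X) (K : Set ℝ) : Set (X × ℝ) :=
  (fun t => (γ t, t)) '' K

/-- The (simplified) *-integral of `ρ` over a curve fragment `γ : K → X`:
`(len γ − ms γ) + ∫_K ρ∘γ`. -/
noncomputable def starInt' {X : Type*} [MetricSpace X] [MeasurableSpace X]
    (γ : ℝ → X) (K : Set ℝ) (ρ : X → ℝ) : ℝ :=
  (sSup K - sInf K - (volume K).toReal) + ∫ t in K, ρ (γ t)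

set_option maxHeartbeats 1000000 in
/-- Lower semicontinuity of the *-integral: if curve fragments `γₙ` converge to `γ_∞` in the
Hausdorff distance of graphs (with uniformly bounded domains) in a compact metric space, and
`ρ : X → [0,1]` is continuous, then `∫*_{γ_∞} ρ ≤ liminf ∫*_{γₙ} ρ`. -/
theorem starInt_lowerSemicontinuous {X : Type*} [MetricSpace X] [CompactSpace X]
    [MeasurableSpace X] [BorelSpace X]
    (ρ : X → ℝ) (hρc : Continuous ρ) (hρ : ∀ x, ρ x ∈ Set.Icc (0 : ℝ) 1)
    (K : ℕ → Set ℝ) (Kinf : Set ℝ) (γ : ℕ → ℝ → X) (γinf : ℝ → X)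
    (hKc : ∀ n, IsCompact (K n)) (hKne : ∀ n, (K n).Nonempty)
    (hKinfc : IsCompact Kinf) (hKinfne : Kinf.Nonempty)
    (hLip : ∀ n, LipschitzOnWith 1 (γ n) (K n)) (hLipinf : LipschitzOnWith 1 γinf Kinf)
    (M : ℝ) (hM : ∀ n, K n ⊆ Set.Icc (-M) M)
    (hconv : Tendsto
      (fun n => EMetric.hausdorffEdist (fragGraph (γ n) (K n)) (fragGraph γinf Kinf))
      atTop (nhds 0)) :
    starInt' γinf Kinf ρ ≤ Filter.liminf (fun n => starInt' (γ n) (K n) ρ) atTop := by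
  classical
  obtain ⟨t₀, ht₀⟩ := hKinfne
  have hKinfne : Kinf.Nonempty := ⟨t₀, ht₀⟩
  have hXne : Nonempty X := ⟨γinf t₀⟩
  set f : X → ℝ := fun x => 1 - ρ x with hfdef
  have hfc : Continuous f := continuous_const.sub hρc
  have hf0 : ∀ x, 0 ≤ f x := fun x => by
    have := (hρ x).2; simp only [hfdef]; linarith
  have hf1 : ∀ x, f x ≤ 1 := fun x => by
    have := (hρ x).1; simp only [hfdef]; linarith
  -- rewrite the star integral
  have key : ∀ (γ' : ℝ → X) (K' : Set ℝ), IsCompact K' → LipschitzOnWith 1 γ' K' →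
      starInt' γ' K' ρ = (sSup K' - sInf K') - ∫ t in K', f (γ' t) := by
    intro γ' K' hc hl
    have hcont : ContinuousOn (fun t => ρ (γ' t)) K' := hρc.comp_continuousOn hl.continuousOn
    have hint : IntegrableOn (fun t => ρ (γ' t)) K' volume := hcont.integrableOn_compact hc
    have h1 : IntegrableOn (fun _ : ℝ => (1 : ℝ)) K' volume :=
      integrableOn_const hc.measure_lt_top.ne
    have h2 : ∫ t in K', f (γ' t) = (volume K').toReal - ∫ t in K', ρ (γ' t) := by
      simp only [hfdef]
      rw [integral_sub h1 hint, setIntegral_const]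
      simp
      rfl
    rw [starInt', h2]; ring
  have hM0 : 0 ≤ M := by
    obtain ⟨t, ht⟩ := hKne 0
    have h := hM 0 ht
    simp only [mem_Icc] at h
    linarith [h.1, h.2]
  have hsupn : ∀ n, sSup (K n) ≤ M := fun n => csSup_le (hKne n) (fun t ht => (hM n ht).2)
  have hinfn : ∀ n, -M ≤ sInf (K n) := fun n => le_csInf (hKne n) (fun t ht => (hM n ht).1)
  have ub : ∀ n, starInt' (γ n) (K n) ρ ≤ 2 * M := by
    intro n
    rw [key (γ n) (K n) (hKc n) (hLip n)]
    have h0 : 0 ≤ ∫ t in K n, f (γ n t) :=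
      setIntegral_nonneg (hKc n).measurableSet (fun t _ => hf0 _)
    linarith [hsupn n, hinfn n]
  have cobdd : IsCoboundedUnder (· ≥ ·) atTop (fun n => starInt' (γ n) (K n) ρ) :=
    isCoboundedUnder_ge_of_le atTop ub
  -- main eventual estimate
  have main : ∀ ε : ℝ, 0 < ε →
      ∀ᶠ n in atTop, starInt' γinf Kinf ρ ≤ starInt' (γ n) (K n) ρ + ε := by
    intro ε hε
    set VK : ℝ := (volume Kinf).toReal with hVKdef
    have hVK0 : 0 ≤ VK := ENNReal.toReal_nonneg
    set ε' : ℝ := min 1 (ε / (4 * (3 * VK + 5))) with hε'def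
    have hε'pos : 0 < ε' := lt_min one_pos (by positivity)
    have hε'1 : ε' ≤ 1 := min_le_left _ _
    have hε'small : ε' * (3 * VK + 5) ≤ ε / 4 := by
      have h1 : ε' ≤ ε / (4 * (3 * VK + 5)) := min_le_right _ _
      have h2 : 0 < 3 * VK + 5 := by linarith
      calc ε' * (3 * VK + 5) ≤ (ε / (4 * (3 * VK + 5))) * (3 * VK + 5) := by nlinarith
        _ = ε / 4 := by field_simp
    -- uniform continuity of f
    obtain ⟨δ₁, hδ₁pos, hδ₁⟩ : ∃ δ₁ : ℝ, 0 < δ₁ ∧ ∀ a b : X, dist a b < δ₁ → dist (f a) (f b) < ε' := by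
      have huc : UniformContinuous f := CompactSpace.uniformContinuous_of_continuous hfc
      rcases Metric.uniformContinuous_iff.1 huc ε' hε'pos with ⟨δ, hδ, H⟩
      exact ⟨δ, hδ, fun a b h => H h⟩
    
    set L : NNReal := (1 / δ₁).toNNReal + 1 with hLdef
    have hLcoe : (L : ℝ) = 1 / δ₁ + 1 := by
      simp [hLdef, Real.coe_toNNReal _ (by positivity : (0:ℝ) ≤ 1 / δ₁), hδ₁pos.le]
    have hL1 : (1 : ℝ) ≤ L := by
      rw [hLcoe]
      have : (0:ℝ) ≤ 1 / δ₁ := by positivity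
      linarith
    have hLpos : (0 : ℝ) < L := lt_of_lt_of_le one_pos hL1
    have hLδ₁ : 1 ≤ (L : ℝ) * δ₁ := by
      rw [hLcoe]; field_simp; nlinarith
    -- Lipschitz approximation of f from above
    have hbdd : ∀ x : X, BddBelow (range fun y => f y + (L : ℝ) * dist x y) := by
      intro x
      refine ⟨0, ?_⟩
      rintro _ ⟨y, rfl⟩
      have := hf0 y
      have := dist_nonneg (x := x) (y := y)
      positivity
    have hInf_le : ∀ x z : X, (⨅ y : X, (f y + (L : ℝ) * dist x y)) ≤ f z + (L : ℝ) * dist x z :=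
      fun x z => ciInf_le (hbdd x) z
    set F : X → ℝ := fun x => (⨅ y : X, (f y + (L : ℝ) * dist x y)) + ε' with hFdef
    have hFle : ∀ x, F x ≤ f x + ε' := by
      intro x
      have h := hInf_le x x
      rw [dist_self, mul_zero, add_zero] at h
      simp only [hFdef]
      linarith
    have hfleF : ∀ x, f x ≤ F x := by
      intro x
      have h : f x - ε' ≤ ⨅ y : X, (f y + (L : ℝ) * dist x y) := by
        apply le_ciInf
        intro z
        by_cases h : dist x z < δ₁
        · have h1 := hδ₁ x z h
          rw [Real.dist_eq] at h1
          have h2 := (abs_lt.1 h1).2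
          have h3 : (0:ℝ) ≤ (L : ℝ) * dist x z := by positivity
          linarith
        · push_neg at h
          have h1 : (L : ℝ) * δ₁ ≤ (L : ℝ) * dist x z := by nlinarith
          have := hf1 x; have := hf0 z
          nlinarith
      simp only [hFdef]
      linarith
    have hFlip : LipschitzWith L F := by
      apply LipschitzWith.of_le_add_mul
      intro x y
      have h : (⨅ z : X, (f z + (L : ℝ) * dist x z)) - (L : ℝ) * dist x y ≤
          ⨅ z : X, (f z + (L : ℝ) * dist y z) := by
        apply le_ciInf
        intro z
        have h1 := hInf_le x z
        have h2 : dist x z ≤ dist x y + dist y z := dist_triangle x y z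
        nlinarith [hLpos.le]
      simp only [hFdef]
      linarith
    -- extend F ∘ γinf to a Lipschitz function on ℝ
    have hFγ : LipschitzOnWith L (fun t => F (γinf t)) Kinf := by
      have h := hFlip.comp_lipschitzOnWith hLipinf
      rw [mul_one] at h
      exact h
    obtain ⟨g, hglip, hgeq⟩ := hFγ.extend_real
    set G : ℝ → ℝ := fun t => max (g t) 0 with hGdef
    have hGc : Continuous G := hglip.continuous.max continuous_const
    have hG0 : ∀ t, 0 ≤ G t := fun t => le_max_right _ _
    have hGeqK : ∀ t ∈ Kinf, G t = F (γinf t) := by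
      intro t ht
      have h1 : g t = F (γinf t) := (hgeq ht).symm
      simp only [hGdef]
      rw [h1, max_eq_left (le_trans (hf0 _) (hfleF _))]
    have hglipR : ∀ s t : ℝ, g s ≤ g t + (L : ℝ) * dist s t := by
      intro s t
      have h := hglip.dist_le_mul s t
      rw [Real.dist_eq] at h
      have := (abs_le.1 h).2
      linarith
    -- volume of cthickening
    have hvol := tendsto_measure_cthickening_of_isCompact (μ := volume) hKinfc
    have hlt : volume Kinf < volume Kinf + ENNReal.ofReal ε' :=
      ENNReal.lt_add_right hKinfc.measure_lt_top.ne
        (by simp [ENNReal.ofReal_eq_zero]; linarith)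
    have hev : ∀ᶠ r in 𝓝 (0 : ℝ),
        volume (cthickening r Kinf) < volume Kinf + ENNReal.ofReal ε' :=
      hvol.eventually_lt_const hlt
    rcases Metric.eventually_nhds_iff.1 hev with ⟨η, hηpos, hη⟩
    set δ : ℝ := min (η / 2) (min δ₁ (min (ε / 8) (ε' / L))) with hδdef
    have hδpos : 0 < δ := by
      refine lt_min (by positivity) (lt_min hδ₁pos (lt_min (by positivity) (by positivity)))
    have hδδ₁ : δ ≤ δ₁ := le_trans (min_le_right _ _) (min_le_left _ _)
    have hδε : δ ≤ ε / 8 :=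
      le_trans (min_le_right _ _) (le_trans (min_le_right _ _) (min_le_left _ _))
    have hδL : (L : ℝ) * δ ≤ ε' := by
      have h1 : δ ≤ ε' / L :=
        le_trans (min_le_right _ _) (le_trans (min_le_right _ _) (min_le_right _ _))
      have := mul_le_mul_of_nonneg_left h1 hLpos.le
      calc (L : ℝ) * δ ≤ (L : ℝ) * (ε' / L) := this
        _ = ε' := by field_simp
    have hδη : volume (cthickening δ Kinf) < volume Kinf + ENNReal.ofReal ε' := by
      apply hη
      rw [Real.dist_eq, sub_zero, abs_of_pos hδpos]
      calc δ ≤ η / 2 := min_le_left _ _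
        _ < η := by linarith
    set T : Set ℝ := cthickening δ Kinf with hTdef
    have hTc : IsCompact T := hKinfc.cthickening
    have hKT : Kinf ⊆ T := self_subset_cthickening _
    have hvolD : (volume (T \ Kinf)).toReal ≤ ε' := by
      have h1 : volume (T \ Kinf) ≤ ENNReal.ofReal ε' := by
        have h2 := measure_diff (μ := volume) hKT hKinfc.measurableSet.nullMeasurableSet
          (hKinfc.measure_lt_top (μ := volume)).ne
        rw [h2]
        exact tsub_le_iff_left.2 hδη.le
      calc (volume (T \ Kinf)).toReal ≤ (ENNReal.ofReal ε').toReal :=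
            ENNReal.toReal_mono (by simp) h1
        _ = ε' := ENNReal.toReal_ofReal hε'pos.le
    have hvolT : (volume T).toReal ≤ VK + ε' := by
      calc (volume T).toReal ≤ (volume Kinf + ENNReal.ofReal ε').toReal :=
            ENNReal.toReal_mono
              (by exact ENNReal.add_ne_top.2 ⟨hKinfc.measure_lt_top.ne, by simp⟩) hδη.le
        _ = VK + ε' := by
            rw [ENNReal.toReal_add hKinfc.measure_lt_top.ne (by simp),
              ENNReal.toReal_ofReal hε'pos.le]
    -- bound of G on T
    have hGT : ∀ t ∈ T, G t ≤ 1 + 2 * ε' := by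
      intro t ht
      obtain ⟨s, hs, hds⟩ := hKinfc.exists_infEdist_eq_edist hKinfne t
      have h1 : infEDist t Kinf ≤ ENNReal.ofReal δ := mem_cthickening_iff.1 ht
      rw [hds] at h1
      have hdist : dist t s ≤ δ := (edist_le_ofReal hδpos.le).1 h1
      have h3 := hglipR t s
      have h4 : g s = F (γinf s) := (hgeq hs).symm
      have h5 : F (γinf s) ≤ 1 + ε' := le_trans (hFle _) (by linarith [hf1 (γinf s)])
      have h6 : (L : ℝ) * dist t s ≤ (L : ℝ) * δ := by
        exact mul_le_mul_of_nonneg_left hdist hLpos.le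
      have h7 : g t ≤ 1 + 2 * ε' := by
        have := hδL
        rw [h4] at h3
        linarith
      simp only [hGdef]
      exact max_le h7 (by linarith)
    -- pass to eventual n
    have hofδ : (0 : ENNReal) < ENNReal.ofReal δ := ENNReal.ofReal_pos.2 hδpos
    filter_upwards [hconv.eventually_lt_const hofδ] with n hn
    have hgraphinf_c : IsCompact (fragGraph γinf Kinf) :=
      hKinfc.image_of_continuousOn (hLipinf.continuousOn.prodMk continuousOn_id)
    have hgraphn_c : IsCompact (fragGraph (γ n) (K n)) :=
      (hKc n).image_of_continuousOn ((hLip n).continuousOn.prodMk continuousOn_id)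
    have hgraphinf_ne : (fragGraph γinf Kinf).Nonempty := ⟨(γinf t₀, t₀), ⟨t₀, ht₀, rfl⟩⟩
    obtain ⟨t₁, ht₁⟩ := hKne n
    have hgraphn_ne : (fragGraph (γ n) (K n)).Nonempty := ⟨(γ n t₁, t₁), ⟨t₁, ht₁, rfl⟩⟩
    -- approximation of points of K n by points of Kinf
    have happrox : ∀ t ∈ K n, ∃ s ∈ Kinf, dist (γ n t) (γinf s) < δ ∧ dist t s < δ := by
      intro t ht
      have h1 : infEDist ((γ n t, t) : X × ℝ) (fragGraph γinf Kinf) <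
          ENNReal.ofReal δ :=
        lt_of_le_of_lt
          (EMetric.infEdist_le_hausdorffEdist_of_mem
            (show ((γ n t, t) : X × ℝ) ∈ fragGraph (γ n) (K n) from ⟨t, ht, rfl⟩)) hn
      obtain ⟨p, hp, hpe⟩ := hgraphinf_c.exists_infEdist_eq_edist hgraphinf_ne
        ((γ n t, t) : X × ℝ)
      obtain ⟨s, hs, rfl⟩ := hp
      rw [hpe, Prod.edist_eq, max_lt_iff] at h1
      exact ⟨s, hs, edist_lt_ofReal.1 h1.1, edist_lt_ofReal.1 h1.2⟩
    -- approximation of points of Kinf by points of K n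
    have happrox' : ∀ s ∈ Kinf, ∃ t ∈ K n, dist (γinf s) (γ n t) < δ ∧ dist s t < δ := by
      intro s hs
      have h1 : infEDist ((γinf s, s) : X × ℝ) (fragGraph (γ n) (K n)) <
          ENNReal.ofReal δ := by
        refine lt_of_le_of_lt
          (EMetric.infEdist_le_hausdorffEdist_of_mem
            (show ((γinf s, s) : X × ℝ) ∈ fragGraph γinf Kinf from ⟨s, hs, rfl⟩)) ?_
        rwa [EMetric.hausdorffEdist_comm]
      obtain ⟨p, hp, hpe⟩ := hgraphn_c.exists_infEdist_eq_edist hgraphn_ne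
        ((γinf s, s) : X × ℝ)
      obtain ⟨t, ht, rfl⟩ := hp
      rw [hpe, Prod.edist_eq, max_lt_iff] at h1
      exact ⟨t, ht, edist_lt_ofReal.1 h1.1, edist_lt_ofReal.1 h1.2⟩
    -- endpoints
    have hSup : sSup Kinf ≤ sSup (K n) + δ := by
      obtain ⟨t, ht, _, hd⟩ := happrox' (sSup Kinf) (hKinfc.sSup_mem hKinfne)
      have h1 : t ≤ sSup (K n) := le_csSup (hKc n).bddAbove ht
      rw [Real.dist_eq] at hd
      have := (abs_lt.1 hd).2
      linarith
    have hInf : sInf (K n) ≤ sInf Kinf + δ := by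
      obtain ⟨t, ht, _, hd⟩ := happrox' (sInf Kinf) (hKinfc.sInf_mem hKinfne)
      have h1 : sInf (K n) ≤ t := csInf_le (hKc n).bddBelow ht
      rw [Real.dist_eq] at hd
      have := (abs_lt.1 hd).1
      linarith
    -- pointwise bound on K n
    have hpt : ∀ t ∈ K n, f (γ n t) ≤ G t + ((L : ℝ) * δ + ε') := by
      intro t ht
      obtain ⟨s, hs, hd1, hd2⟩ := happrox t ht
      have h1 := hδ₁ _ _ (lt_of_lt_of_le hd1 hδδ₁)
      rw [Real.dist_eq] at h1
      have h2 : f (γ n t) ≤ f (γinf s) + ε' := by linarith [(abs_lt.1 h1).2]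
      have h3 : f (γinf s) ≤ g s := by
        rw [show g s = F (γinf s) from (hgeq hs).symm]
        exact hfleF _
      have h4 := hglipR s t
      have h5 : g t ≤ G t := le_max_left _ _
      have h6 : (L : ℝ) * dist s t ≤ (L : ℝ) * δ := by
        rw [dist_comm] at hd2
        exact mul_le_mul_of_nonneg_left hd2.le hLpos.le
      linarith
    have hKnT : K n ⊆ T := by
      intro t ht
      obtain ⟨s, hs, _, hd2⟩ := happrox t ht
      exact mem_cthickening_of_dist_le t s δ Kinf hs hd2.le
    -- integrability
    have hint_n : IntegrableOn (fun t => f (γ n t)) (K n) volume :=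
      (hfc.comp_continuousOn (hLip n).continuousOn).integrableOn_compact (hKc n)
    have hint_inf : IntegrableOn (fun t => f (γinf t)) Kinf volume :=
      (hfc.comp_continuousOn hLipinf.continuousOn).integrableOn_compact hKinfc
    have hint_G_T : IntegrableOn G T volume := hGc.continuousOn.integrableOn_compact hTc
    have hint_G_Kn : IntegrableOn G (K n) volume := hint_G_T.mono_set hKnT
    have hint_G_Kinf : IntegrableOn G Kinf volume := hint_G_T.mono_set hKT
    have hint_G_D : IntegrableOn G (T \ Kinf) volume := hint_G_T.mono_set diff_subset
    have hconst_Kn : IntegrableOn (fun _ : ℝ => (L : ℝ) * δ + ε') (K n) volume :=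
      integrableOn_const (hKc n).measure_lt_top.ne
    -- integral comparison chain
    have s1 : ∫ t in K n, f (γ n t) ≤ ∫ t in K n, (G t + ((L : ℝ) * δ + ε')) :=
      setIntegral_mono_on hint_n (hint_G_Kn.add hconst_Kn) (hKc n).measurableSet hpt
    have s2 : ∫ t in K n, (G t + ((L : ℝ) * δ + ε')) =
        (∫ t in K n, G t) + ((L : ℝ) * δ + ε') * (volume (K n)).toReal := by
      rw [integral_add hint_G_Kn hconst_Kn, setIntegral_const, Measure.real]
      rw [smul_eq_mul]; ring
    have s3 : ∫ t in K n, G t ≤ ∫ t in T, G t :=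
      setIntegral_mono_set hint_G_T (ae_of_all _ hG0) (HasSubset.Subset.eventuallyLE hKnT)
    have s4 : ∫ t in T, G t = (∫ t in Kinf, G t) + ∫ t in T \ Kinf, G t := by
      rw [← setIntegral_union disjoint_sdiff_right
        (hTc.measurableSet.diff hKinfc.measurableSet) hint_G_Kinf hint_G_D,
        union_diff_cancel hKT]
    have s5 : ∫ t in Kinf, G t ≤ (∫ t in Kinf, f (γinf t)) + ε' * VK := by
      have hptKinf : ∀ t ∈ Kinf, G t ≤ f (γinf t) + ε' := by
        intro t ht
        rw [hGeqK t ht]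
        exact hFle _
      have hconst : IntegrableOn (fun _ : ℝ => ε') Kinf volume :=
        integrableOn_const hKinfc.measure_lt_top.ne
      calc ∫ t in Kinf, G t ≤ ∫ t in Kinf, (f (γinf t) + ε') :=
            setIntegral_mono_on hint_G_Kinf (hint_inf.add hconst)
              hKinfc.measurableSet hptKinf
        _ = (∫ t in Kinf, f (γinf t)) + ε' * VK := by
            rw [integral_add hint_inf hconst, setIntegral_const, Measure.real, smul_eq_mul, hVKdef]
            ring
    have s6 : ∫ t in T \ Kinf, G t ≤ 3 * ε' := by
      have hconst : IntegrableOn (fun _ : ℝ => 1 + 2 * ε') (T \ Kinf) volume :=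
        integrableOn_const (lt_of_le_of_lt (measure_mono diff_subset) hTc.measure_lt_top).ne
      have hb : ∀ t ∈ T \ Kinf, G t ≤ 1 + 2 * ε' := fun t ht => hGT t ht.1
      calc ∫ t in T \ Kinf, G t ≤ ∫ _ in T \ Kinf, (1 + 2 * ε') :=
            setIntegral_mono_on hint_G_D hconst
              (hTc.measurableSet.diff hKinfc.measurableSet) hb
        _ = (volume (T \ Kinf)).toReal * (1 + 2 * ε') := by
            rw [setIntegral_const, Measure.real, smul_eq_mul]
        _ ≤ 3 * ε' := by nlinarith [hvolD, hε'pos.le, hε'1]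
    have s7 : (volume (K n)).toReal ≤ VK + ε' := by
      refine le_trans ?_ hvolT
      exact ENNReal.toReal_mono hTc.measure_lt_top.ne (measure_mono hKnT)
    have hCn : ∫ t in K n, f (γ n t) ≤ (∫ t in Kinf, f (γinf t)) + ε' * (3 * VK + 5) := by
      have h8 : (0:ℝ) ≤ (volume (K n)).toReal := ENNReal.toReal_nonneg
      have h9 : ((L : ℝ) * δ + ε') * (volume (K n)).toReal ≤ 2 * ε' * (VK + ε') := by
        refine mul_le_mul (by linarith [hδL]) s7 h8 (by positivity)
      have h10 : 2 * ε' * (VK + ε') ≤ 2 * ε' * VK + 2 * ε' := by nlinarith [hε'pos.le, hε'1]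
      linarith [s1, s2.le, s3, s4.le, s5, s6]
    -- conclude
    rw [key γinf Kinf hKinfc hLipinf, key (γ n) (K n) (hKc n) (hLip n)]
    have h2δ : 2 * δ ≤ ε / 4 := by linarith
    linarith [hSup, hInf, hCn, hε'small]
  -- wrap up with liminf
  refine le_of_forall_pos_le_add ?_
  intro ε hε
  rw [← sub_le_iff_le_add]
  refine le_liminf_of_le cobdd ?_
  filter_upwards [main ε hε] with n h
  linarith
end
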